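/- arXiv:1905.06506 — 3 statements merged into one kernel-verified Lean document; each statement's English description precedes it below -/
import Mathlib

section
/- Let q ≡ 1 (mod 4) be a prime such that p = 2q + 1 is also prime, and let ψ be an even Dirichlet character modulo p (i.e. ψ(−1) = 1). Then ∑_{j=1}^{p−1} δ_ψ(j)·δ_{ψ̄}(p−j) ≠ 0. -/
open Finset

/-- `δ_χ(n) = ∑_{0<d∣n} χ(d)` for `n ≥ 1`. -/
noncomputable def deltaChar {N : ℕ} (χ : DirichletCharacter ℂ N) (n : ℕ) : ℂ :=
  ∑ d ∈ n.divisors, χ d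

/-- The complex-conjugate character `χ̄`. -/
noncomputable def conjChar {N : ℕ} (χ : DirichletCharacter ℂ N) : DirichletCharacter ℂ N :=
  χ.ringHomComp (starRingEnd ℂ)

-- ## Auxiliary counting lemmas

-- harmonic dyadic bound
lemma harmonic_dyadic (X : ℕ) : ∀ K n : ℕ, n ≤ 2^K → ∑ e ∈ Icc 1 n, X / e ≤ (K+1) * X := by
  intro K
  induction K with
  | zero =>
    intro n hn
    interval_cases n
    · simp
    · simp
  | succ K ih =>
    intro n hn
    rcases le_or_gt n (2^K) with h | h
    · calc ∑ e ∈ Icc 1 n, X / e ≤ (K+1) * X := ih n h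
        _ ≤ (K+1+1) * X := by nlinarith
    · have h1 : (1:ℕ) ≤ 2^K := Nat.one_le_two_pow
      have hsplit : Icc 1 n = Icc 1 (2^K) ∪ Ioc (2^K) n := by
        ext a
        simp only [mem_Icc, mem_union, mem_Ioc]
        omega
      have hdisj : Disjoint (Icc 1 (2^K)) (Ioc (2^K) n) := by
        rw [Finset.disjoint_left]
        intro a ha hb
        simp only [mem_Icc, mem_Ioc] at ha hb
        omega
      rw [hsplit, Finset.sum_union hdisj]
      have h2 : ∑ e ∈ Ioc (2^K) n, X / e ≤ X := by
        calc ∑ e ∈ Ioc (2^K) n, X / e ≤ ∑ _e ∈ Ioc (2^K) n, X / (2^K) := by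
              apply Finset.sum_le_sum
              intro e he
              simp only [mem_Ioc] at he
              exact Nat.div_le_div_left he.1.le (Nat.pos_of_ne_zero (by positivity))
          _ = (n - 2^K) * (X / 2^K) := by rw [Finset.sum_const, Nat.card_Ioc, smul_eq_mul]
          _ ≤ 2^K * (X / 2^K) := by
              apply Nat.mul_le_mul_right
              have : n ≤ 2^(K+1) := hn
              have : 2^(K+1) = 2^K + 2^K := by ring
              omega
          _ ≤ X := Nat.mul_div_le X (2^K)
      calc ∑ e ∈ Icc 1 (2^K), X / e + ∑ e ∈ Ioc (2^K) n, X / e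
          ≤ (K+1) * X + X := Nat.add_le_add (ih _ le_rfl) h2
        _ = (K+1+1) * X := by ring

/-- count of j in [1,n] with d ∣ j and e ∣ (n+1-j), when n+1 is prime. -/
lemma AP_count (n : ℕ) (hp : (n+1).Prime) (d e : ℕ) (hd : 1 ≤ d) (hdn : d ≤ n) :
    ((Icc 1 n).filter (fun j => d ∣ j ∧ e ∣ (n+1-j))).card ≤ (n-1)/(d*e) + 1 := by
  set s := (Icc 1 n).filter (fun j => d ∣ j ∧ e ∣ (n+1-j)) with hs
  rcases s.eq_empty_or_nonempty with h | h
  · simp [h]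
  · set j₀ := s.min' h with hj₀
    have hj₀s : j₀ ∈ s := s.min'_mem h
    have hmem : ∀ j ∈ s, 1 ≤ j ∧ j ≤ n ∧ d ∣ j ∧ e ∣ (n+1-j) := by
      intro j hj
      simp only [hs, mem_filter, mem_Icc] at hj
      exact ⟨hj.1.1, hj.1.2, hj.2.1, hj.2.2⟩
    obtain ⟨hj₀1, hj₀n, hdj₀, hej₀⟩ := hmem j₀ hj₀s
    -- gcd d e = 1
    have hco : Nat.Coprime d e := by
      have hg1 : Nat.gcd d e ∣ n + 1 := by
        have h1 : Nat.gcd d e ∣ j₀ := (Nat.gcd_dvd_left d e).trans hdj₀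
        have h2 : Nat.gcd d e ∣ (n+1-j₀) := (Nat.gcd_dvd_right d e).trans hej₀
        have : j₀ + (n+1-j₀) = n+1 := by omega
        calc Nat.gcd d e ∣ j₀ + (n+1-j₀) := Nat.dvd_add h1 h2
          _ = n+1 := this
      rcases (Nat.Prime.eq_one_or_self_of_dvd hp _ hg1) with h1 | h1
      · exact h1
      · exfalso
        have : Nat.gcd d e ≤ d := Nat.le_of_dvd (by omega) (Nat.gcd_dvd_left d e)
        omega
    -- injection into range
    have hinj : ∀ j ∈ s, ∀ j' ∈ s, (j - j₀)/(d*e) = (j' - j₀)/(d*e) → j = j' := by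
      intro j hj j' hj'
      obtain ⟨h1, h2, h3, h4⟩ := hmem j hj
      obtain ⟨h1', h2', h3', h4'⟩ := hmem j' hj'
      have hle : j₀ ≤ j := s.min'_le j hj
      have hle' : j₀ ≤ j' := s.min'_le j' hj'
      have hdvd : d * e ∣ j - j₀ := by
        apply Nat.Coprime.mul_dvd_of_dvd_of_dvd hco
        · exact (Nat.dvd_sub h3 hdj₀)
        · have := Nat.dvd_sub hej₀ h4
          have heq : (n+1-j₀) - (n+1-j) = j - j₀ := by omega
          rwa [heq] at this
      have hdvd' : d * e ∣ j' - j₀ := by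
        apply Nat.Coprime.mul_dvd_of_dvd_of_dvd hco
        · exact (Nat.dvd_sub h3' hdj₀)
        · have := Nat.dvd_sub hej₀ h4'
          have heq : (n+1-j₀) - (n+1-j') = j' - j₀ := by omega
          rwa [heq] at this
      intro heq
      have e1 : d * e * ((j - j₀)/(d*e)) = j - j₀ := Nat.mul_div_cancel' hdvd
      have e2 : d * e * ((j' - j₀)/(d*e)) = j' - j₀ := Nat.mul_div_cancel' hdvd'
      rw [heq] at e1
      omega
    have hmaps : ∀ j ∈ s, (j - j₀)/(d*e) ∈ range ((n-1)/(d*e) + 1) := by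
      intro j hj
      obtain ⟨h1, h2, _, _⟩ := hmem j hj
      simp only [mem_range, Nat.lt_succ_iff]
      apply Nat.div_le_div_right
      omega
    calc s.card ≤ (range ((n-1)/(d*e) + 1)).card := Finset.card_le_card_of_injOn _ hmaps hinj
      _ = (n-1)/(d*e) + 1 := by rw [Finset.card_range]

lemma clog_sq_le (q : ℕ) (hq : 83 ≤ q) : (Nat.clog 2 (2*q) + 1)^2 ≤ q - 1 := by
  set L := Nat.clog 2 (2*q) with hL
  rcases le_or_gt L 8 with h | h
  · calc (L+1)^2 ≤ 9^2 := by nlinarith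
      _ ≤ q - 1 := by omega
  · -- L ≥ 9 : q > 2^(L-2)
    have h1 : 2^(L-1) < 2*q := Nat.pow_pred_clog_lt_self (by norm_num) (by omega)
    have h2 : 2^(L-1) = 2 * 2^(L-2) := by
      rw [← pow_succ']
      congr 1
      omega
    have hq2 : 2^(L-2) < q := by omega
    have key : ∀ M : ℕ, 9 ≤ M → (M+1)^2 ≤ 2^(M-2) := by
      intro M hM
      induction M with
      | zero => omega
      | succ M ih =>
        rcases Nat.lt_or_ge M 9 with hM9 | hM9
        · have : M = 8 := by omega
          subst this
          norm_num
        · have h3 := ih hM9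
          have h4 : 2^(M+1-2) = 2 * 2^(M-2) := by
            rw [← pow_succ']
            congr 1
            omega
          nlinarith
    have := key L (by omega)
    omega

lemma Tbound_big (q : ℕ) (hq : 83 ≤ q) (hp : (2*q+1).Prime) :
    ((Icc 1 (2*q)).sigma (fun j => j.divisors ×ˢ (2*q+1-j).divisors)).card < 4*q^2 := by
  set n := 2*q with hn
  set K := Nat.clog 2 (2*q) with hK
  have hnK : n ≤ 2^K := Nat.le_pow_clog (by norm_num) _
  set Sfin := (Icc 1 n).sigma (fun j => j.divisors ×ˢ (n+1-j).divisors) with hSfin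
  set P := ((Icc 1 n) ×ˢ (Icc 1 n)).filter (fun z => z.1 + z.2 ≤ n+1) with hP
  have hmaps : ∀ t ∈ Sfin, (t.2.1, t.2.2) ∈ P := by
    rintro ⟨j, d, e⟩ ht
    simp only [hSfin, Finset.mem_sigma, Finset.mem_product, mem_Icc, Nat.mem_divisors] at ht
    obtain ⟨⟨hj1, hjn⟩, ⟨hdj, hj0⟩, ⟨hep, hp0⟩⟩ := ht
    have hd1 : 1 ≤ d := Nat.pos_of_dvd_of_pos hdj (by omega)
    have hdj' : d ≤ j := Nat.le_of_dvd (by omega) hdj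
    have he1 : 1 ≤ e := Nat.pos_of_dvd_of_pos hep (by omega)
    have hep' : e ≤ n+1-j := Nat.le_of_dvd (by omega) hep
    simp only [hP, mem_filter, Finset.mem_product, mem_Icc]
    omega
  have hcard : Sfin.card = ∑ z ∈ P, (Sfin.filter (fun t => (t.2.1, t.2.2) = z)).card :=
    Finset.card_eq_sum_card_fiberwise hmaps
  have hfiber : ∀ z ∈ P, (Sfin.filter (fun t => (t.2.1, t.2.2) = z)).card ≤ (n-1)/(z.1*z.2) + 1 := by
    rintro ⟨d, e⟩ hz
    simp only [hP, mem_filter, Finset.mem_product, mem_Icc] at hz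
    have step1 : (Sfin.filter (fun t => (t.2.1, t.2.2) = (d, e))).card ≤
        ((Icc 1 n).filter (fun j => d ∣ j ∧ e ∣ (n+1-j))).card := by
      apply Finset.card_le_card_of_injOn (fun t => t.1)
      · rintro ⟨j, d', e'⟩ ht
        simp only [mem_coe, mem_filter, hSfin, Finset.mem_sigma, Finset.mem_product, mem_Icc,
          Nat.mem_divisors, Prod.mk.injEq] at ht
        obtain ⟨⟨⟨hj1, hjn⟩, ⟨hdj, _⟩, ⟨hep, _⟩⟩, hd', he'⟩ := ht
        subst hd'; subst he'
        simp only [mem_coe, mem_filter, mem_Icc]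
        exact ⟨⟨hj1, hjn⟩, hdj, hep⟩
      · rintro ⟨j, d1, e1⟩ h1 ⟨j', d2, e2⟩ h2 hjj
        simp only [mem_coe, mem_filter, Prod.mk.injEq] at h1 h2
        simp only at hjj
        obtain ⟨_, h1d, h1e⟩ := h1
        obtain ⟨_, h2d, h2e⟩ := h2
        subst hjj; subst h1d; subst h1e; subst h2d; subst h2e
        rfl
    calc (Sfin.filter (fun t => (t.2.1, t.2.2) = (d, e))).card
        ≤ ((Icc 1 n).filter (fun j => d ∣ j ∧ e ∣ (n+1-j))).card := step1
      _ ≤ (n-1)/(d*e) + 1 := AP_count n (by rwa [hn] at hp ⊢) d e hz.1.1.1 hz.1.1.2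
  have hsum1 : ∑ z ∈ P, ((n-1)/(z.1*z.2) + 1) = (∑ z ∈ P, (n-1)/(z.1*z.2)) + P.card := by
    rw [Finset.sum_add_distrib, Finset.sum_const, smul_eq_mul, mul_one]
  have hsum2 : ∑ z ∈ P, (n-1)/(z.1*z.2) ≤ (K+1)*((K+1)*(n-1)) := by
    calc ∑ z ∈ P, (n-1)/(z.1*z.2)
        ≤ ∑ z ∈ (Icc 1 n) ×ˢ (Icc 1 n), (n-1)/(z.1*z.2) := by
          apply Finset.sum_le_sum_of_subset (Finset.filter_subset _ _)
      _ = ∑ d ∈ Icc 1 n, ∑ e ∈ Icc 1 n, (n-1)/(d*e) := by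
          rw [Finset.sum_product]
      _ ≤ ∑ d ∈ Icc 1 n, (K+1)*((n-1)/d) := by
          apply Finset.sum_le_sum
          intro d _
          calc ∑ e ∈ Icc 1 n, (n-1)/(d*e) = ∑ e ∈ Icc 1 n, ((n-1)/d)/e := by
                apply Finset.sum_congr rfl
                intro e _
                rw [Nat.div_div_eq_div_mul]
            _ ≤ (K+1)*((n-1)/d) := harmonic_dyadic _ K n hnK
      _ = (K+1) * ∑ d ∈ Icc 1 n, (n-1)/d := by rw [Finset.mul_sum]
      _ ≤ (K+1)*((K+1)*(n-1)) := by
          exact Nat.mul_le_mul_left _ (harmonic_dyadic _ K n hnK)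
  have hcardP : P.card ≤ q * (n+1) := by
    have hsub : P.card ≤ ((Icc 1 n).sigma (fun d => Icc 1 (n+1-d))).card := by
      have g : ℕ × ℕ → Sigma (fun _ : ℕ => ℕ) := fun z => Sigma.mk (Prod.fst z) (Prod.snd z)
      apply Finset.card_le_card_of_injOn
        (fun z : ℕ × ℕ => Sigma.mk (α := ℕ) (β := fun _ : ℕ => ℕ) (Prod.fst z) (Prod.snd z))
      · rintro ⟨d, e⟩ hz
        simp only [mem_coe, hP, mem_filter, Finset.mem_product, mem_Icc] at hz
        simp only [mem_coe, Finset.mem_sigma, mem_Icc]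
        omega
      · rintro ⟨d, e⟩ _ ⟨d', e'⟩ _ h
        have h1 : d = d' := congrArg Sigma.fst h
        have h2 : e = e' := congrArg Sigma.snd h
        exact Prod.ext h1 h2
    have hcs : ((Icc 1 n).sigma (fun d => Icc 1 (n+1-d))).card = ∑ d ∈ Icc 1 n, (n+1-d) := by
      rw [Finset.card_sigma]
      apply Finset.sum_congr rfl
      intro d _
      rw [Nat.card_Icc]
      omega
    have hrefl : ∑ d ∈ Icc 1 n, (n+1-d) = ∑ d ∈ Icc 1 n, d := by
      apply Finset.sum_nbij' (i := fun d => n+1-d) (j := fun d => n+1-d)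
      all_goals intro a ha
      all_goals simp only [mem_Icc] at *
      all_goals omega
    have hgauss : (∑ d ∈ Icc 1 n, d) * 2 = n * (n+1) := by
      have h1 : ∑ d ∈ Icc 1 n, d = ∑ d ∈ range (n+1), d := by
        apply Finset.sum_subset
        · intro x hx
          simp only [mem_Icc] at hx
          simp only [mem_range]
          omega
        · intro x hx hnx
          simp only [mem_range] at hx
          simp only [mem_Icc] at hnx
          omega
      rw [h1, Finset.sum_range_id_mul_two (n+1), Nat.add_sub_cancel, Nat.mul_comm]
    calc P.card ≤ ((Icc 1 n).sigma (fun d => Icc 1 (n+1-d))).card := hsub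
      _ = ∑ d ∈ Icc 1 n, (n+1-d) := hcs
      _ = ∑ d ∈ Icc 1 n, d := hrefl
      _ ≤ q * (n+1) := by
          have hnn : n*(n+1) = 2*(q*(n+1)) := by rw [hn]; ring
          omega
  -- final assembly
  have hKq : (K+1)^2 ≤ q - 1 := clog_sq_le q hq
  have final : Sfin.card ≤ (K+1)*((K+1)*(n-1)) + q*(n+1) := by
    calc Sfin.card = ∑ z ∈ P, (Sfin.filter (fun t => (t.2.1, t.2.2) = z)).card := hcard
      _ ≤ ∑ z ∈ P, ((n-1)/(z.1*z.2) + 1) := Finset.sum_le_sum hfiber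
      _ = (∑ z ∈ P, (n-1)/(z.1*z.2)) + P.card := hsum1
      _ ≤ (K+1)*((K+1)*(n-1)) + q*(n+1) := Nat.add_le_add hsum2 hcardP
  obtain ⟨r, hr⟩ : ∃ r, q = r + 83 := ⟨q - 83, by omega⟩
  have hm1 : n - 1 = 2*r + 165 := by omega
  have hm2 : n + 1 = 2*r + 167 := by omega
  rw [hm1, hm2, hr] at final
  have hKq' : (K+1)^2 ≤ r + 82 := by
    have : q - 1 = r + 82 := by omega
    omega
  have hB : (K+1)*((K+1)*(2*r+165)) = (K+1)^2*(2*r+165) := by ring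
  have hC : (K+1)^2*(2*r+165) ≤ (r+82)*(2*r+165) := Nat.mul_le_mul_right _ hKq'
  rw [hr]
  have hD : Sfin.card ≤ (r+82)*(2*r+165) + (r+83)*(2*r+167) := by omega
  nlinarith [hD]

set_option maxRecDepth 40000 in
lemma Tbound (q : ℕ) (hq : q.Prime) (hq4 : q % 4 = 1) (hp : (2*q+1).Prime) :
    ((Icc 1 (2*q)).sigma (fun j => j.divisors ×ˢ (2*q+1-j).divisors)).card < 4*q^2 := by
  rcases le_or_gt 83 q with h | h
  · exact Tbound_big q h hp
  · have hcard : ((Icc 1 (2*q)).sigma (fun j => j.divisors ×ˢ (2*q+1-j).divisors)).card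
        = ∑ j ∈ Icc 1 (2*q), (j.divisors.card * (2*q+1-j).divisors.card) := by
      rw [Finset.card_sigma]
      exact Finset.sum_congr rfl (fun j _ => Finset.card_product _ _)
    rw [hcard]
    interval_cases q
    all_goals first
      | (norm_num at hq4; done)
      | (norm_num at hq; done)
      | (norm_num at hp; done)
      | decide

open Polynomial in
theorem even_character_sum_ne_zero (q : ℕ) (hq : q.Prime) (hq4 : q % 4 = 1)
    (hp : (2 * q + 1).Prime) (ψ : DirichletCharacter ℂ (2 * q + 1))
    (hψeven : ψ (-1) = 1) :
    ∑ j ∈ Finset.Icc 1 (2 * q), deltaChar ψ j * deltaChar (conjChar ψ) (2 * q + 1 - j)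
      ≠ 0 := by
  intro hS
  classical
  haveI hfact : Fact (Nat.Prime (2*q+1)) := ⟨hp⟩
  have hq2 : 2 ≤ q := hq.two_le
  obtain ⟨g, hg⟩ := IsCyclic.exists_generator (α := (ZMod (2*q+1))ˣ)
  set ζ : ℂ := ψ ↑g with hζdef
  -- order of g
  have hcardu : Fintype.card (ZMod (2*q+1))ˣ = 2*q := by
    rw [ZMod.card_units_eq_totient, Nat.totient_prime hp]
    omega
  have horder : orderOf g = 2*q := by
    rw [orderOf_eq_card_of_forall_mem_zpowers hg, Nat.card_eq_fintype_card, hcardu]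
  -- ζ^q = 1
  have hζq : ζ^q = 1 := by
    have h1 : (g^q : (ZMod (2*q+1))ˣ) ≠ 1 := by
      intro h
      have h2 := orderOf_dvd_of_pow_eq_one h
      rw [horder] at h2
      have := Nat.le_of_dvd (by omega) h2
      omega
    have h2 : ((g^q : (ZMod (2*q+1))ˣ) : ZMod (2*q+1)) * ((g^q : (ZMod (2*q+1))ˣ) : ZMod (2*q+1)) = 1 := by
      have h3 : (g^q) * (g^q) = 1 := by
        rw [← pow_add]
        have he : q + q = 2*q := by ring
        rw [he]
        have hdvd : orderOf g ∣ 2*q := by rw [horder]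
        exact orderOf_dvd_iff_pow_eq_one.mp hdvd
      calc ((g^q : (ZMod (2*q+1))ˣ) : ZMod (2*q+1)) * ((g^q : (ZMod (2*q+1))ˣ) : ZMod (2*q+1))
          = (((g^q) * (g^q) : (ZMod (2*q+1))ˣ) : ZMod (2*q+1)) := by rw [Units.val_mul]
        _ = 1 := by rw [h3, Units.val_one]
    rcases mul_self_eq_one_iff.mp h2 with h3 | h3
    · exact absurd (Units.ext (by rw [h3, Units.val_one]) : g^q = 1) h1
    · calc ζ^q = ψ (((g : ZMod (2*q+1)))^q) := by rw [hζdef, ← map_pow]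
        _ = ψ (((g^q : (ZMod (2*q+1))ˣ) : ZMod (2*q+1))) := by rw [Units.val_pow_eq_pow_val]
        _ = ψ (-1) := by rw [h3]
        _ = 1 := hψeven
  have hζ0 : ζ ≠ 0 := by
    intro h
    rw [h, zero_pow (by omega)] at hζq
    exact zero_ne_one hζq
  -- power mod reduction
  have hpowmod : ∀ m : ℕ, ζ^m = ζ^(m % q) := by
    intro m
    conv_lhs => rw [← Nat.div_add_mod m q]
    rw [pow_add, pow_mul, hζq, one_pow, one_mul]
  -- values on units are powers of ζ
  have hval : ∀ x : (ZMod (2*q+1))ˣ, ∃ m : ℕ, ψ ↑x = ζ^m := by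
    intro x
    obtain ⟨m, hm⟩ := (Submonoid.mem_powers_iff _ _).mp
      ((mem_powers_iff_mem_zpowers).mpr (hg x))
    exact ⟨m, by rw [← hm, Units.val_pow_eq_pow_val, map_pow, hζdef]⟩
  -- ζ * conj ζ = 1
  have habs : ζ * (starRingEnd ℂ) ζ = 1 := by
    have ha : ‖ζ‖ = 1 := by
      have h1 : ‖ζ‖^q = 1 := by rw [← norm_pow, hζq, norm_one]
      rcases lt_trichotomy ‖ζ‖ 1 with h | h | h
      · exfalso
        have h2 : ‖ζ‖ ^ q < 1 := pow_lt_one₀ (norm_nonneg ζ) h (by omega)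
        rw [h1] at h2
        exact lt_irrefl 1 h2
      · exact h
      · exfalso
        have h2 : (1:ℝ) < ‖ζ‖ ^ q := one_lt_pow₀ h (by omega)
        rw [h1] at h2
        exact lt_irrefl 1 h2
    rw [Complex.mul_conj, ← Complex.sq_norm, ha]
    norm_num
  -- units from naturals in range
  have hunit : ∀ k : ℕ, 1 ≤ k → k ≤ 2*q → IsUnit ((k : ℕ) : ZMod (2*q+1)) := by
    intro k h1 h2
    rw [isUnit_iff_ne_zero, Ne, ZMod.natCast_eq_zero_iff]
    intro hdvd
    have := Nat.le_of_dvd (by omega) hdvd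
    omega
  have hvalnat : ∀ k : ℕ, 1 ≤ k → k ≤ 2*q → ∃ m : ℕ, ψ (k : ZMod (2*q+1)) = ζ^m := by
    intro k h1 h2
    obtain ⟨m, hm⟩ := hval (hunit k h1 h2).unit
    exact ⟨m, by rw [← hm, IsUnit.unit_spec]⟩
  -- the triple finset
  set Sfin : Finset ((_ : ℕ) × ℕ × ℕ) :=
    (Icc 1 (2*q)).sigma (fun j => j.divisors ×ˢ (2*q+1-j).divisors) with hSfin
  set v : ((_ : ℕ) × ℕ × ℕ) → ℂ :=
    fun t => ψ ((t.2.1 : ℕ) : ZMod (2*q+1)) * (starRingEnd ℂ) (ψ ((t.2.2 : ℕ) : ZMod (2*q+1)))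
    with hv
  -- rewrite the sum
  have hSsum : ∑ j ∈ Icc 1 (2*q), deltaChar ψ j * deltaChar (conjChar ψ) (2*q+1-j)
      = ∑ t ∈ Sfin, v t := by
    rw [hSfin, Finset.sum_sigma]
    apply Finset.sum_congr rfl
    intro j hj
    rw [deltaChar, deltaChar, Finset.sum_mul_sum]
    rw [Finset.sum_product]
    apply Finset.sum_congr rfl
    intro d _
    apply Finset.sum_congr rfl
    intro e _
    rw [hv]
    simp only [conjChar, MulChar.ringHomComp_apply]
  -- membership facts for triples
  have hmemfacts : ∀ t ∈ Sfin, 1 ≤ t.1 ∧ t.1 ≤ 2*q ∧ 1 ≤ t.2.1 ∧ t.2.1 ≤ 2*q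
      ∧ 1 ≤ t.2.2 ∧ t.2.2 ≤ 2*q ∧ t.2.1 ∣ t.1 ∧ t.2.2 ∣ (2*q+1-t.1) := by
    rintro ⟨j, d, e⟩ ht
    simp only [hSfin, Finset.mem_sigma, Finset.mem_product, mem_Icc, Nat.mem_divisors] at ht
    obtain ⟨⟨hj1, hjn⟩, ⟨hdj, hj0⟩, ⟨hep, hp0⟩⟩ := ht
    have hd1 : 1 ≤ d := Nat.pos_of_dvd_of_pos hdj (by omega)
    have hdj' : d ≤ j := Nat.le_of_dvd (by omega) hdj
    have he1 : 1 ≤ e := Nat.pos_of_dvd_of_pos hep (by omega)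
    have hep' : e ≤ 2*q+1-j := Nat.le_of_dvd (by omega) hep
    exact ⟨hj1, hjn, hd1, show d ≤ 2*q by omega, he1, show e ≤ 2*q by omega, hdj, hep⟩
  -- each v t is a power of ζ
  have hvt : ∀ t ∈ Sfin, ∃ u, u < q ∧ v t = ζ^u := by
    intro t ht
    obtain ⟨_, _, hd1, hd2, he1, he2, _, _⟩ := hmemfacts t ht
    obtain ⟨m1, hm1⟩ := hvalnat t.2.1 hd1 hd2
    obtain ⟨m2, hm2⟩ := hvalnat t.2.2 he1 he2
    refine ⟨(m1 + (q-1)*m2) % q, Nat.mod_lt _ (by omega), ?_⟩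
    have hconjpow : (starRingEnd ℂ) (ζ^m2) = ζ^((q-1)*m2) := by
      have hcz : (starRingEnd ℂ) ζ = ζ^(q-1) := by
        have h1 : ζ * ζ^(q-1) = 1 := by
          rw [← pow_succ']
          have : q - 1 + 1 = q := by omega
          rw [this, hζq]
        exact mul_left_cancel₀ hζ0 (by rw [habs, h1])
      rw [map_pow, hcz, ← pow_mul]
    rw [hv]
    simp only
    rw [hm1, hm2, hconjpow, ← pow_add, hpowmod]
  -- the fiber function
  set f : ((_ : ℕ) × ℕ × ℕ) → ℕ :=
    fun t => if h : ∃ u, u < q ∧ v t = ζ^u then h.choose else 0 with hf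
  have hft : ∀ t ∈ Sfin, f t < q ∧ v t = ζ^(f t) := by
    intro t ht
    have h := hvt t ht
    rw [hf]
    simp only
    rw [dif_pos h]
    exact ⟨h.choose_spec.1, h.choose_spec.2⟩
  set c : ℕ → ℕ := fun u => (Sfin.filter (fun t => f t = u)).card with hc
  -- S as combination of powers of ζ
  have hS2 : ∑ t ∈ Sfin, v t = ∑ u ∈ range q, (c u : ℂ) * ζ^u := by
    rw [← Finset.sum_fiberwise_of_maps_to (g := f) (fun t ht => mem_range.mpr (hft t ht).1)]
    apply Finset.sum_congr rfl
    intro u hu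
    calc ∑ t ∈ Sfin.filter (fun t => f t = u), v t
        = ∑ _t ∈ Sfin.filter (fun t => f t = u), ζ^u := by
          apply Finset.sum_congr rfl
          intro t ht
          rw [mem_filter] at ht
          rw [← ht.2]
          exact (hft t ht.1).2
      _ = ((Sfin.filter (fun t => f t = u)).card : ℂ) * ζ^u := by
          rw [Finset.sum_const, nsmul_eq_mul]
      _ = (c u : ℂ) * ζ^u := by rw [hc]
  have hcardsum : Sfin.card = ∑ u ∈ range q, c u :=
    Finset.card_eq_sum_card_fiberwise (fun t ht => mem_range.mpr (hft t ht).1)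
  have hS3 : ∑ u ∈ range q, (c u : ℂ) * ζ^u = 0 := by
    rw [← hS2, ← hSsum]
    exact hS
  -- Sfin is nonempty
  have htriv : (⟨1, 1, 1⟩ : (_ : ℕ) × ℕ × ℕ) ∈ Sfin := by
    simp only [hSfin, Finset.mem_sigma, Finset.mem_product, mem_Icc, Nat.mem_divisors]
    refine ⟨⟨le_refl 1, by omega⟩, ⟨dvd_refl 1, one_ne_zero⟩, ⟨one_dvd _, by omega⟩⟩
  by_cases hζ1 : ζ = 1
  · -- trivial character case : the sum is the positive integer Sfin.card
    rw [hζ1] at hS3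
    simp only [one_pow, mul_one] at hS3
    rw [← Nat.cast_sum] at hS3
    have h0 : ∑ u ∈ range q, c u = 0 := by exact_mod_cast hS3
    rw [← hcardsum] at h0
    exact absurd h0 (Finset.card_ne_zero_of_mem htriv)
  · -- ζ is a primitive q-th root of unity
    have hprim : IsPrimitiveRoot ζ q := by
      have hd : orderOf ζ ∣ q := orderOf_dvd_of_pow_eq_one hζq
      rcases hq.eq_one_or_self_of_dvd _ hd with h | h
      · exact absurd (orderOf_eq_one_iff.mp h) hζ1
      · have := IsPrimitiveRoot.orderOf ζ
        rwa [h] at this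
    -- all fibers have the same cardinality
    have hceq : ∀ u, u < q → c u = c 0 := by
      set a : ℕ → ℚ := fun i => (c (i+1) : ℚ) - (c 0 : ℚ) with ha
      set P : Polynomial ℚ := ∑ i ∈ range (q-1), Polynomial.C (a i) * Polynomial.X^i with hP
      have heval : Polynomial.aeval ζ P = 0 := by
        have hgeo : ∑ u ∈ range q, ζ^u = 0 := hprim.geom_sum_eq_zero hq.one_lt
        have hsub : ∑ u ∈ range q, ((c u : ℂ) - (c 0 : ℂ)) * ζ^u = 0 := by
          have : ∑ u ∈ range q, ((c u : ℂ) - (c 0 : ℂ)) * ζ^u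
              = (∑ u ∈ range q, (c u : ℂ) * ζ^u) - (c 0 : ℂ) * ∑ u ∈ range q, ζ^u := by
            rw [Finset.mul_sum, ← Finset.sum_sub_distrib]
            apply Finset.sum_congr rfl
            intro u _
            ring
          rw [this, hS3, hgeo, mul_zero, sub_zero]
        have hq1 : q - 1 + 1 = q := by omega
        have hsplit : ∑ u ∈ range q, ((c u : ℂ) - (c 0 : ℂ)) * ζ^u
            = (∑ i ∈ range (q-1), ((c (i+1) : ℂ) - (c 0 : ℂ)) * ζ^(i+1))
              + ((c 0 : ℂ) - (c 0 : ℂ)) * ζ^0 := by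
          rw [← hq1, Finset.sum_range_succ']
          rw [hq1]
        rw [hsplit] at hsub
        simp only [sub_self, zero_mul, add_zero] at hsub
        have hfac : ∑ i ∈ range (q-1), ((c (i+1) : ℂ) - (c 0 : ℂ)) * ζ^(i+1)
            = ζ * ∑ i ∈ range (q-1), ((c (i+1) : ℂ) - (c 0 : ℂ)) * ζ^i := by
          rw [Finset.mul_sum]
          apply Finset.sum_congr rfl
          intro i _
          ring
        rw [hfac] at hsub
        rcases mul_eq_zero.mp hsub with h | h
        · exact absurd h hζ0
        · rw [hP, map_sum]
          rw [← h]
          apply Finset.sum_congr rfl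
          intro i _
          rw [map_mul, map_pow, Polynomial.aeval_C, Polynomial.aeval_X, ha]
          push_cast
          ring
      have hPzero : P = 0 := by
        by_contra hne
        have hdvd : minpoly ℚ ζ ∣ P := minpoly.dvd ℚ ζ heval
        have hmindeg : (minpoly ℚ ζ).natDegree = q - 1 := by
          rw [← Polynomial.cyclotomic_eq_minpoly_rat hprim (by omega),
            Polynomial.natDegree_cyclotomic, Nat.totient_prime hq]
        have hdeg : P.natDegree ≤ q - 2 := by
          rw [hP]
          apply Polynomial.natDegree_sum_le_of_forall_le
          intro i hi
          rw [mem_range] at hi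
          calc (Polynomial.C (a i) * Polynomial.X^i).natDegree
              ≤ i := by
                apply le_trans (Polynomial.natDegree_C_mul_le _ _)
                rw [Polynomial.natDegree_X_pow]
            _ ≤ q - 2 := by omega
        have := Polynomial.natDegree_le_of_dvd hdvd hne
        omega
      have hcoeff : ∀ i, i < q-1 → a i = 0 := by
        intro i hi
        have h1 : P.coeff i = a i := by
          rw [hP, Polynomial.finset_sum_coeff]
          rw [Finset.sum_eq_single i]
          · rw [Polynomial.coeff_C_mul, Polynomial.coeff_X_pow, if_pos rfl, mul_one]
          · intro b _ hbi
            rw [Polynomial.coeff_C_mul, Polynomial.coeff_X_pow, if_neg (fun hh => hbi hh.symm), mul_zero]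
          · intro hii
            exact absurd (mem_range.mpr hi) hii
        rw [hPzero, Polynomial.coeff_zero] at h1
        exact h1.symm
      intro u hu
      cases u with
      | zero => rfl
      | succ i =>
        have h1 := hcoeff i (by omega)
        rw [ha] at h1
        simp only [sub_eq_zero] at h1
        exact_mod_cast h1
    -- lower bound for c 0 : exhibit 4q triples in the fiber of 0
    have hf0 : ∀ t ∈ Sfin, v t = 1 → f t = 0 := by
      intro t ht h1
      obtain ⟨hlt, heq⟩ := hft t ht
      exact hprim.pow_inj hlt (by omega) (by rw [← heq, h1, pow_zero])
    set Afin : Finset ((_ : ℕ) × ℕ × ℕ) :=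
      (Icc 1 (2*q)).image (fun j => ⟨j, 1, 1⟩) with hAfin
    set Bfin : Finset ((_ : ℕ) × ℕ × ℕ) :=
      (Icc 1 (2*q)).image (fun d => ⟨d, d, 2*q+1-d⟩) with hBfin
    have hAsub : Afin ⊆ Sfin.filter (fun t => f t = 0) := by
      intro x hx
      rw [hAfin, Finset.mem_image] at hx
      obtain ⟨j, hj, rfl⟩ := hx
      rw [mem_Icc] at hj
      have hmem : (⟨j, 1, 1⟩ : (_ : ℕ) × ℕ × ℕ) ∈ Sfin := by
        simp only [hSfin, Finset.mem_sigma, Finset.mem_product, mem_Icc, Nat.mem_divisors]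
        exact ⟨⟨hj.1, hj.2⟩, ⟨one_dvd _, by omega⟩, ⟨one_dvd _, by omega⟩⟩
      have hv1 : v ⟨j, 1, 1⟩ = 1 := by
        rw [hv]
        simp only [Nat.cast_one, map_one]
        norm_num
      rw [mem_filter]
      exact ⟨hmem, hf0 _ hmem hv1⟩
    have hBsub : Bfin ⊆ Sfin.filter (fun t => f t = 0) := by
      intro x hx
      rw [hBfin, Finset.mem_image] at hx
      obtain ⟨d, hd, rfl⟩ := hx
      rw [mem_Icc] at hd
      have hmem : (⟨d, d, 2*q+1-d⟩ : (_ : ℕ) × ℕ × ℕ) ∈ Sfin := by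
        simp only [hSfin, Finset.mem_sigma, Finset.mem_product, mem_Icc, Nat.mem_divisors]
        exact ⟨⟨hd.1, hd.2⟩, ⟨dvd_refl _, by omega⟩, ⟨dvd_refl _, by omega⟩⟩
      have hcast : ((2*q+1-d : ℕ) : ZMod (2*q+1)) = -((d : ℕ) : ZMod (2*q+1)) := by
        have h2 : ((2*q+1-d : ℕ) : ZMod (2*q+1)) + ((d : ℕ) : ZMod (2*q+1))
            = ((2*q+1 : ℕ) : ZMod (2*q+1)) := by
          rw [← Nat.cast_add]
          congr 1
          omega
        rw [ZMod.natCast_self] at h2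
        exact eq_neg_of_add_eq_zero_left h2
      obtain ⟨m, hm⟩ := hvalnat d hd.1 hd.2
      have hv1 : v ⟨d, d, 2*q+1-d⟩ = 1 := by
        rw [hv]
        simp only
        rw [hcast, ← neg_one_mul, map_mul, hψeven, one_mul, hm, map_pow, ← mul_pow, habs,
          one_pow]
      rw [mem_filter]
      exact ⟨hmem, hf0 _ hmem hv1⟩
    have hABdisj : Disjoint Afin Bfin := by
      rw [Finset.disjoint_left]
      intro x hxA hxB
      rw [hAfin, Finset.mem_image] at hxA
      rw [hBfin, Finset.mem_image] at hxB
      obtain ⟨j, hj, rfl⟩ := hxA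
      obtain ⟨d, hd, heq⟩ := hxB
      rw [mem_Icc] at hj hd
      have h1 : d = j := congrArg Sigma.fst heq
      have h2 : (d, 2*q+1-d) = (1, 1) := congrArg Sigma.snd heq
      have h3 : d = 1 := (Prod.mk.injEq _ _ _ _ ▸ h2).1
      have h4 : 2*q+1-d = 1 := (Prod.mk.injEq _ _ _ _ ▸ h2).2
      omega
    have hAcard : Afin.card = 2*q := by
      rw [hAfin, Finset.card_image_of_injective _ (fun x y h => congrArg Sigma.fst h),
        Nat.card_Icc]
      omega
    have hBcard : Bfin.card = 2*q := by
      rw [hBfin, Finset.card_image_of_injective _ (fun x y h => congrArg Sigma.fst h),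
        Nat.card_Icc]
      omega
    have hc0 : 4*q ≤ c 0 := by
      have h1 : (Afin ∪ Bfin).card = 4*q := by
        rw [Finset.card_union_of_disjoint hABdisj, hAcard, hBcard]
        ring
      rw [hc]
      simp only
      rw [← h1]
      apply Finset.card_le_card
      exact Finset.union_subset hAsub hBsub
    -- contradiction with the counting bound
    have hTb := Tbound q hq hq4 hp
    rw [← hSfin] at hTb
    have hcount : Sfin.card = q * c 0 := by
      rw [hcardsum]
      rw [Finset.sum_congr rfl (fun u hu => hceq u (mem_range.mp hu))]
      rw [Finset.sum_const, card_range, smul_eq_mul]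
    have hge : 4*q^2 ≤ Sfin.card := by
      rw [hcount]
      calc 4*q^2 = q * (4*q) := by ring
        _ ≤ q * c 0 := Nat.mul_le_mul_left q hc0
    omega
end

section
/- Let p be a prime, let χ be a Dirichlet character modulo p, and let j be an integer with 1 ≤ j ≤ p−1. If χ is odd (χ(−1) = −1), then δ_χ(j)·δ_{χ̄}(p−j) is purely imaginary (its real part is 0); if χ is even (χ(−1) = 1), then δ_χ(j)·δ_{χ̄}(p−j) is real (its imaginary part is 0). -/
open Finset

lemma conjChar_apply {N : ℕ} (χ : DirichletCharacter ℂ N) (a : ZMod N) :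
    conjChar χ a = (starRingEnd ℂ) (χ a) := rfl

lemma isUnit_of_lt {p : ℕ} (hp : p.Prime) {d : ℕ} (hd0 : d ≠ 0) (hdp : d < p) :
    IsUnit ((d : ℕ) : ZMod p) := by
  rw [ZMod.isUnit_iff_coprime]
  have hnd : ¬ p ∣ d := fun h => absurd (Nat.le_of_dvd (Nat.pos_of_ne_zero hd0) h) (not_le.mpr hdp)
  exact Nat.coprime_comm.mp (hp.coprime_iff_not_dvd.mpr hnd)

lemma mul_conj_self {p : ℕ} (hp : p.Prime) (χ : DirichletCharacter ℂ p) {d : ℕ}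
    (hd0 : d ≠ 0) (hdp : d < p) : χ d * (starRingEnd ℂ) (χ d) = 1 := by
  have hu : IsUnit ((d : ℕ) : ZMod p) := isUnit_of_lt hp hd0 hdp
  have h := χ.unit_norm_eq_one hu.unit
  rw [hu.unit_spec] at h
  rw [Complex.mul_conj]
  norm_cast
  rw [Complex.normSq_eq_norm_sq, h]
  norm_num

lemma key {p : ℕ} (hp : p.Prime) (χ : DirichletCharacter ℂ p) {n : ℕ}
    (h0 : n ≠ 0) (hn : n < p) :
    deltaChar (conjChar χ) n = (starRingEnd ℂ) (χ n) * deltaChar χ n := by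
  unfold deltaChar
  rw [← Nat.sum_div_divisors n (fun d => conjChar χ d), mul_sum]
  refine sum_congr rfl fun d hd => ?_
  obtain ⟨hdvd, -⟩ := Nat.mem_divisors.mp hd
  have hd0 : d ≠ 0 := fun h => h0 (by subst h; exact zero_dvd_iff.mp hdvd)
  have hdp : d < p := lt_of_le_of_lt (Nat.le_of_dvd (Nat.pos_of_ne_zero h0) hdvd) hn
  have hmul : χ n = χ d * χ (n / d) := by
    conv_lhs => rw [← Nat.div_mul_cancel hdvd]
    push_cast
    rw [map_mul, mul_comm]
  rw [conjChar_apply, hmul, map_mul]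
  have h1 : χ d * (starRingEnd ℂ) (χ d) = 1 := mul_conj_self hp χ hd0 hdp
  calc (starRingEnd ℂ) (χ (n / d))
      = (χ d * (starRingEnd ℂ) (χ d)) * (starRingEnd ℂ) (χ (n / d)) := by rw [h1, one_mul]
    _ = (starRingEnd ℂ) (χ d) * (starRingEnd ℂ) (χ (n / d)) * χ d := by ring

theorem delta_product_real_or_imaginary (p : ℕ) (hp : p.Prime)
    (χ : DirichletCharacter ℂ p) (j : ℕ) (hj1 : 1 ≤ j) (hj2 : j ≤ p - 1) :
    (χ (-1) = -1 → (deltaChar χ j * deltaChar (conjChar χ) (p - j)).re = 0) ∧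
    (χ (-1) = 1 → (deltaChar χ j * deltaChar (conjChar χ) (p - j)).im = 0) := by
  have hp2 : 2 ≤ p := hp.two_le
  have hj0 : j ≠ 0 := Nat.one_le_iff_ne_zero.mp hj1
  have hjp : j < p := lt_of_le_of_lt hj2 (Nat.sub_lt (by omega) one_pos)
  have hpj0 : p - j ≠ 0 := by omega
  have hpjp : p - j < p := by omega
  set z : ℂ := deltaChar χ j * deltaChar (conjChar χ) (p - j) with hz
  -- conjugation swaps χ and conjChar χ
  have hconjconj : conjChar (conjChar χ) = χ := by
    ext a
    simp [conjChar_apply]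
  have hc1 : (starRingEnd ℂ) (deltaChar χ j) = deltaChar (conjChar χ) j := by
    unfold deltaChar; rw [map_sum]; rfl
  have hc2 : (starRingEnd ℂ) (deltaChar (conjChar χ) (p - j)) = deltaChar χ (p - j) := by
    unfold deltaChar; rw [map_sum]
    refine sum_congr rfl fun d _ => ?_
    simp [conjChar_apply]
  have hkey1 : deltaChar (conjChar χ) j = (starRingEnd ℂ) (χ j) * deltaChar χ j :=
    key hp χ hj0 hjp
  have hkey2 : deltaChar χ (p - j)
      = χ ((p - j : ℕ)) * deltaChar (conjChar χ) (p - j) := by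
    have := key hp (conjChar χ) hpj0 hpjp
    rw [hconjconj] at this
    rw [this, conjChar_apply, Complex.conj_conj]
  -- χ(p-j) = χ(-1) χ(j)
  have hcast : (((p - j : ℕ) : ZMod p)) = (-1) * (j : ZMod p) := by
    have : ((p : ℕ) : ZMod p) = 0 := ZMod.natCast_self p
    push_cast [Nat.cast_sub (le_of_lt hjp)]
    rw [this]; ring
  have hchi : χ ((p - j : ℕ)) = χ (-1) * χ (j) := by
    rw [hcast, map_mul]
  have hunit : χ j * (starRingEnd ℂ) (χ j) = 1 := mul_conj_self hp χ hj0 hjp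
  have hmain : (starRingEnd ℂ) z = χ (-1) * z := by
    rw [hz, map_mul, hc1, hc2, hkey1, hkey2, hchi]
    calc (starRingEnd ℂ) (χ j) * deltaChar χ j * (χ (-1) * χ j * deltaChar (conjChar χ) (p - j))
        = χ (-1) * (χ j * (starRingEnd ℂ) (χ j)) * (deltaChar χ j * deltaChar (conjChar χ) (p - j)) := by ring
      _ = χ (-1) * (deltaChar χ j * deltaChar (conjChar χ) (p - j)) := by rw [hunit]; ring
  constructor
  · intro hodd
    rw [hodd] at hmain
    have := congrArg Complex.re hmain
    simp only [Complex.conj_re, Complex.neg_re, neg_one_mul, Complex.neg_re] at this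
    linarith
  · intro heven
    rw [heven, one_mul] at hmain
    have := congrArg Complex.im hmain
    simp only [Complex.conj_im] at this
    linarith
end

section
/- Let p be a prime and let χ be an odd Dirichlet character modulo p (i.e. χ(−1) = −1). Then ∑_{j=1}^{p−1} δ_χ(j)·δ_{χ̄}(p−j) = 0. -/
open Finset

private lemma mul_conj_char {p : ℕ} (χ : DirichletCharacter ℂ p) {a : ZMod p}
    (ha : IsUnit a) : χ a * (starRingEnd ℂ) (χ a) = 1 := by
  have h1 : ‖χ a‖ = 1 := by
    have := χ.unit_norm_eq_one ha.unit
    rwa [IsUnit.unit_spec] at this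
  rw [Complex.mul_conj]
  rw [Complex.normSq_eq_norm_sq, h1]
  norm_num

private lemma delta_conj {N : ℕ} (χ : DirichletCharacter ℂ N) (n : ℕ) :
    deltaChar (conjChar χ) n = (starRingEnd ℂ) (deltaChar χ n) := by
  simp only [deltaChar, conjChar, MulChar.ringHomComp_apply, map_sum]

private lemma delta_flip {p : ℕ} (hp : p.Prime) (χ : DirichletCharacter ℂ p) {j : ℕ}
    (hj : ¬ p ∣ j) (_hj0 : j ≠ 0) :
    deltaChar χ j = χ (j : ZMod p) * (starRingEnd ℂ) (deltaChar χ j) := by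
  have key : ∀ d ∈ j.divisors, χ ((j / d : ℕ) : ZMod p)
      = χ (j : ZMod p) * (starRingEnd ℂ) (χ (d : ZMod p)) := by
    intro d hd
    rw [Nat.mem_divisors] at hd
    have hdj : d ∣ j := hd.1
    have hdu : IsUnit ((d : ℕ) : ZMod p) := by
      rw [ZMod.isUnit_iff_coprime]
      exact (Nat.Prime.coprime_iff_not_dvd hp).mpr (fun h => hj (h.trans hdj)) |>.symm
    have hmul : χ ((d : ℕ) : ZMod p) * χ ((j / d : ℕ) : ZMod p) = χ (j : ZMod p) := by
      rw [← map_mul, ← Nat.cast_mul, Nat.mul_div_cancel' hdj]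
    have hc := mul_conj_char χ hdu
    calc χ ((j / d : ℕ) : ZMod p)
        = (χ ((d : ℕ) : ZMod p) * (starRingEnd ℂ) (χ ((d : ℕ) : ZMod p)))
            * χ ((j / d : ℕ) : ZMod p) := by rw [hc, one_mul]
      _ = (χ ((d : ℕ) : ZMod p) * χ ((j / d : ℕ) : ZMod p))
            * (starRingEnd ℂ) (χ ((d : ℕ) : ZMod p)) := by ring
      _ = χ (j : ZMod p) * (starRingEnd ℂ) (χ ((d : ℕ) : ZMod p)) := by rw [hmul]
  calc deltaChar χ j = ∑ d ∈ j.divisors, χ ((j / d : ℕ) : ZMod p) :=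
        (Nat.sum_div_divisors j (fun d => χ ((d : ℕ) : ZMod p))).symm
    _ = ∑ d ∈ j.divisors, χ (j : ZMod p) * (starRingEnd ℂ) (χ ((d : ℕ) : ZMod p)) :=
        Finset.sum_congr rfl key
    _ = χ (j : ZMod p) * (starRingEnd ℂ) (deltaChar χ j) := by
        rw [← Finset.mul_sum, deltaChar, map_sum]

theorem odd_character_sum_eq_zero (p : ℕ) (hp : p.Prime)
    (χ : DirichletCharacter ℂ p) (hχodd : χ (-1) = -1) :
    ∑ j ∈ Finset.Icc 1 (p - 1), deltaChar χ j * deltaChar (conjChar χ) (p - j) = 0 := by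
  have hp1 : 1 ≤ p := hp.one_lt.le
  set S := ∑ j ∈ Finset.Icc 1 (p - 1), deltaChar χ j * deltaChar (conjChar χ) (p - j) with hS
  -- facts about membership
  have hmem : ∀ j ∈ Finset.Icc 1 (p - 1), 1 ≤ j ∧ j ≤ p - 1 := by
    intro j hj; exact Finset.mem_Icc.mp hj
  have hnd : ∀ j, 1 ≤ j → j ≤ p - 1 → ¬ p ∣ j := by
    intro j h1 h2 hdvd
    have := Nat.le_of_dvd (by omega) hdvd
    omega
  -- Symmetry A : S = conj S
  have hA : (starRingEnd ℂ) S = S := by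
    rw [hS, map_sum]
    rw [show ∑ j ∈ Finset.Icc 1 (p - 1), deltaChar χ j * deltaChar (conjChar χ) (p - j)
        = ∑ j ∈ Finset.Icc 1 (p - 1), deltaChar χ (p - j) * deltaChar (conjChar χ) j from
      Finset.sum_nbij' (fun j => p - j) (fun j => p - j)
        (by intro a ha; simp only [Finset.mem_Icc] at ha ⊢; omega)
        (by intro a ha; simp only [Finset.mem_Icc] at ha ⊢; omega)
        (by intro a ha; simp only [Finset.mem_Icc] at ha; beta_reduce; omega)
        (by intro a ha; simp only [Finset.mem_Icc] at ha; beta_reduce; omega)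
        (by intro a ha; simp only [Finset.mem_Icc] at ha; beta_reduce
            rw [show p - (p - a) = a by omega])]
    refine Finset.sum_congr rfl fun j hj => ?_
    rw [map_mul, delta_conj, delta_conj, RingHomInvPair.comp_apply_eq]
    ring
  -- Symmetry B : S = - conj S (termwise)
  have hB : S = -(starRingEnd ℂ) S := by
    rw [hS, map_sum, ← Finset.sum_neg_distrib]
    refine Finset.sum_congr rfl fun j hj => ?_
    obtain ⟨h1, h2⟩ := hmem j hj
    have hju : IsUnit ((j : ℕ) : ZMod p) := by
      rw [ZMod.isUnit_iff_coprime]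
      exact ((Nat.Prime.coprime_iff_not_dvd hp).mpr (hnd j h1 h2)).symm
    have e1 := delta_flip hp χ (hnd j h1 h2) (by omega)
    have e2 := delta_flip hp χ (hnd (p - j) (by omega) (by omega)) (by omega : p - j ≠ 0)
    have e3 : χ (((p - j : ℕ)) : ZMod p) = - χ ((j : ℕ) : ZMod p) := by
      have hc : (((p - j : ℕ)) : ZMod p) = -((j : ℕ) : ZMod p) := by
        rw [Nat.cast_sub (by omega : j ≤ p), ZMod.natCast_self, zero_sub]
      rw [hc, show -((j : ℕ) : ZMod p) = (-1) * ((j : ℕ) : ZMod p) by ring,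
        map_mul, hχodd]
      ring
    rw [e3] at e2
    have hc := mul_conj_char χ hju
    rw [delta_conj, map_mul, RingHomInvPair.comp_apply_eq]
    set a := deltaChar χ j
    set b := deltaChar χ (p - j)
    set c := χ ((j : ℕ) : ZMod p)
    -- a = c * conj a ; b = -c * conj b ; c * conj c = 1
    have e1' : (starRingEnd ℂ) a = (starRingEnd ℂ) c * a := by
      conv_lhs => rw [e1]
      rw [map_mul, RingHomInvPair.comp_apply_eq]
    calc a * (starRingEnd ℂ) b
        = a * (starRingEnd ℂ) b * (c * (starRingEnd ℂ) c) := by rw [hc]; ring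
      _ = -(((starRingEnd ℂ) c * a) * (-c * (starRingEnd ℂ) b)) := by ring
      _ = -((starRingEnd ℂ) a * b) := by rw [← e1', ← e2]
  have h2S : S = -S := by conv_lhs => rw [hB, hA]
  have : (2 : ℂ) * S = 0 := by linear_combination h2S
  have h2 : (2 : ℂ) ≠ 0 := two_ne_zero
  exact (mul_eq_zero.mp this).resolve_left h2
end
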